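/- arXiv:2505.10707 — 9 statements merged into one kernel-verified Lean document; each statement's English description precedes it below -/
import Mathlib

section
/- Let A ⊆ ℕ^n be an affine semigroup and p a prime. Then the p-weak normalization *pA is a finitely generated additive submonoid of ℤ^n. -/
/-- The coordinatewise embedding of `ℤ^n` into `ℝ^n`. -/
noncomputable def toR {n : ℕ} (v : Fin n → ℤ) : Fin n → ℝ := fun i => (v i : ℝ)

/-- The normalization (saturation) `Ā` of an affine semigroup `A ⊆ ℤ^n`:
the elements `v` of the group `G(A)` generated by `A` such that `m • v ∈ A`
for some positive integer `m`. -/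
def normalization {n : ℕ} (A : AddSubmonoid (Fin n → ℤ)) : Set (Fin n → ℤ) :=
  {v | v ∈ AddSubgroup.closure (A : Set (Fin n → ℤ)) ∧ ∃ m : ℕ, 0 < m ∧ m • v ∈ A}

/-- The seminormalization `⁺A`: elements `v ∈ G(A)` with `m • v ∈ A` and `m' • v ∈ A`
for some coprime positive integers `m, m'`. -/
def seminormalization {n : ℕ} (A : AddSubmonoid (Fin n → ℤ)) : Set (Fin n → ℤ) :=
  {v | v ∈ AddSubgroup.closure (A : Set (Fin n → ℤ)) ∧
    ∃ m m' : ℕ, 0 < m ∧ 0 < m' ∧ Nat.Coprime m m' ∧ m • v ∈ A ∧ m' • v ∈ A}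

/-- The `p`-weak normalization `*pA`: elements `v ∈ Ā` with `p ^ e • v ∈ A` for some `e`. -/
def pWeakNormalization {n : ℕ} (A : AddSubmonoid (Fin n → ℤ)) (p : ℕ) : Set (Fin n → ℤ) :=
  {v | v ∈ normalization A ∧ ∃ e : ℕ, p ^ e • v ∈ A}

/-- The quotient `⟦A/m⟧ = {v ∈ Ā : m • v ∈ A}`. -/
def quotBy {n : ℕ} (A : AddSubmonoid (Fin n → ℤ)) (m : ℕ) : Set (Fin n → ℤ) :=
  {v | v ∈ normalization A ∧ m • v ∈ A}


lemma mem_closure_finset_iff {M : Type*} [AddCommMonoid M] [DecidableEq M] (T : Finset M) (x : M) :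
    x ∈ AddSubmonoid.closure (T : Set M) ↔ ∃ c : M → ℕ, x = ∑ t ∈ T, c t • t := by
  constructor
  · intro hx
    obtain ⟨l, hl, hsum⟩ := AddSubmonoid.exists_multiset_of_mem_closure hx
    refine ⟨fun t => l.count t, ?_⟩
    have h0 : x = ∑ t ∈ l.toFinset, l.count t • t := by
      rw [← hsum]; simpa using (Finset.sum_multiset_map_count l id)
    rw [h0]
    refine Finset.sum_subset (fun t ht => hl t (Multiset.mem_toFinset.1 ht)) ?_
    intro t _ ht
    rw [Multiset.count_eq_zero.2 (fun h => ht (Multiset.mem_toFinset.2 h)), zero_smul]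
  · rintro ⟨c, rfl⟩
    refine AddSubmonoid.sum_mem _ fun t ht => ?_
    exact nsmul_mem (AddSubmonoid.subset_closure ht) (c t)


/-- For an affine semigroup `A ⊆ ℕ^n` and a prime `p`, the `p`-weak
normalization `*pA` is a finitely generated additive submonoid of `ℤ^n`. -/
theorem stmt1 (n : ℕ) (A : AddSubmonoid (Fin n → ℤ)) (hFG : A.FG)
    (hnonneg : ∀ v ∈ A, ∀ i, 0 ≤ v i) (p : ℕ) (hp : p.Prime) :
    ∃ S : Finset (Fin n → ℤ),
      (AddSubmonoid.closure (S : Set (Fin n → ℤ)) : Set (Fin n → ℤ)) =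
        pWeakNormalization A p := by
  classical
  obtain ⟨T, hT⟩ := hFG
  set M : Set (Fin n → ℤ) := pWeakNormalization A p with hMdef
  have hTA : ∀ t ∈ T, t ∈ A := fun t ht => hT ▸ AddSubmonoid.subset_closure ht
  have hAM : ∀ v ∈ A, v ∈ M := by
    intro v hv
    exact ⟨⟨AddSubgroup.subset_closure hv, 1, one_pos, by simpa using hv⟩, 0, by simpa using hv⟩
  have hMadd : ∀ v ∈ M, ∀ w ∈ M, v + w ∈ M := by
    rintro v ⟨⟨hvG, m, hm, hmv⟩, e, hev⟩ w ⟨⟨hwG, m', hm', hmw⟩, e', hew⟩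
    refine ⟨⟨AddSubgroup.add_mem _ hvG hwG, m * m', Nat.mul_pos hm hm', ?_⟩, e + e', ?_⟩
    · rw [smul_add]
      exact A.add_mem (by rw [mul_comm, mul_smul]; exact nsmul_mem hmv m')
        (by rw [mul_smul]; exact nsmul_mem hmw m)
    · rw [smul_add]
      exact A.add_mem (by rw [pow_add, mul_comm, mul_smul]; exact nsmul_mem hev _)
        (by rw [pow_add, mul_smul]; exact nsmul_mem hew _)
  have hM0 : (0 : Fin n → ℤ) ∈ M := hAM 0 A.zero_mem
  set Msub : AddSubmonoid (Fin n → ℤ) :=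
    { carrier := M, zero_mem' := hM0, add_mem' := fun hv hw => hMadd _ hv _ hw } with hMsubdef
  set s : Fin n → ℤ := fun i => ∑ t ∈ T, t i with hsdef
  set Box : Set (Fin n → ℤ) := Set.pi Set.univ (fun i => Set.Icc 0 (s i)) with hBoxdef
  have hBoxFin : Box.Finite := Set.Finite.pi (fun i => Set.finite_Icc _ _)
  -- decomposition of normalization elements
  have hdecomp : ∀ v ∈ normalization A, ∃ w ∈ Box, ∃ c : (Fin n → ℤ) → ℕ,
      v = w + ∑ t ∈ T, c t • t := by
    rintro v ⟨hvG, m, hm, hmv⟩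
    rw [← hT] at hmv
    obtain ⟨c, hc⟩ := (mem_closure_finset_iff T (m • v)).1 hmv
    set a : Fin n → ℤ := ∑ t ∈ T, (c t / m) • t with hadef
    set w : Fin n → ℤ := v - a with hwdef
    have h1 : ∑ t ∈ T, c t • t = m • a + ∑ t ∈ T, (c t % m) • t := by
      rw [hadef, Finset.smul_sum, ← Finset.sum_add_distrib]
      refine Finset.sum_congr rfl fun t _ => ?_
      rw [smul_smul, ← add_smul, Nat.div_add_mod]
    have hmw : m • w = ∑ t ∈ T, (c t % m) • t := by
      rw [hwdef, smul_sub, hc, h1, add_sub_cancel_left]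
    have hmpos : (0 : ℤ) < (m : ℤ) := by exact_mod_cast hm
    have hwBox : w ∈ Box := by
      intro i _
      have happ : (m : ℤ) * w i = ∑ t ∈ T, (c t % m : ℤ) * t i := by
        have := congrFun hmw i
        simpa [Finset.sum_apply, nsmul_eq_mul] using this
      constructor
      · have hnn : 0 ≤ (m : ℤ) * w i := by
          rw [happ]
          exact Finset.sum_nonneg fun t ht =>
            mul_nonneg (Int.natCast_nonneg _) (hnonneg t (hTA t ht) i)
        nlinarith
      · have hub : (m : ℤ) * w i ≤ (m : ℤ) * s i := by
          rw [happ, hsdef, Finset.mul_sum]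
          refine Finset.sum_le_sum fun t ht => ?_
          refine mul_le_mul_of_nonneg_right ?_ (hnonneg t (hTA t ht) i)
          exact_mod_cast le_of_lt (Nat.mod_lt _ hm)
        exact le_of_mul_le_mul_left hub hmpos
    exact ⟨w, hwBox, fun t => c t / m, by rw [hwdef, ← hadef]; exact (sub_add_cancel v a).symm⟩
  -- ideals of coefficient vectors
  set J : (Fin n → ℤ) → Set ({t // t ∈ T} → ℕ) := fun w =>
    {x | w + ∑ t ∈ T.attach, x t • (t : Fin n → ℤ) ∈ M} with hJdef
  have hJup : ∀ w, ∀ x ∈ J w, ∀ y : {t // t ∈ T} → ℕ, x ≤ y → y ∈ J w := by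
    intro w x hx y hxy
    have hsum : ∑ t ∈ T.attach, y t • (t : Fin n → ℤ) =
        ∑ t ∈ T.attach, x t • (t : Fin n → ℤ) +
          ∑ t ∈ T.attach, (y t - x t) • (t : Fin n → ℤ) := by
      rw [← Finset.sum_add_distrib]
      refine Finset.sum_congr rfl fun t _ => ?_
      rw [← add_smul, Nat.add_sub_cancel' (hxy t)]
    show w + ∑ t ∈ T.attach, y t • (t : Fin n → ℤ) ∈ M
    rw [hsum, ← add_assoc]
    refine hMadd _ hx _ (hAM _ ?_)
    exact AddSubmonoid.sum_mem _ fun t _ => nsmul_mem (hTA t t.2) _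
  set F : (Fin n → ℤ) → Set ({t // t ∈ T} → ℕ) := fun w =>
    {x | x ∈ J w ∧ ∀ y ∈ J w, ¬ y < x} with hFdef
  have hFfin : ∀ w, (F w).Finite := by
    intro w
    haveI : IsWellOrder ℕ (· < ·) := inferInstance
    refine IsAntichain.finite_of_partiallyWellOrderedOn ?_ (Set.isPWO_of_wellQuasiOrderedLE (F w))
    intro x hx y hy hxy hle
    exact hy.2 x hx.1 (lt_of_le_of_ne hle hxy)
  have hmin : ∀ w, ∀ x ∈ J w, ∃ y ∈ F w, y ≤ x := by
    intro w x hx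
    set K : Set ({t // t ∈ T} → ℕ) := {y | y ∈ J w ∧ y ≤ x} with hKdef
    haveI : IsWellOrder ℕ (· < ·) := inferInstance
    have hK : K.IsWF := (Set.isPWO_of_wellQuasiOrderedLE K).isWF
    have hne : K.Nonempty := ⟨x, hx, le_refl x⟩
    refine ⟨hK.min hne, ⟨(hK.min_mem hne).1, ?_⟩, (hK.min_mem hne).2⟩
    intro y hy hlt
    exact hK.not_lt_min hne (⟨hy, hlt.le.trans (hK.min_mem hne).2⟩ : y ∈ K) hlt
  -- the generating set
  set Gen : Set (Fin n → ℤ) := ↑T ∪ ⋃ w ∈ Box,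
    (fun x : {t // t ∈ T} → ℕ => w + ∑ t ∈ T.attach, x t • (t : Fin n → ℤ)) '' F w with hGendef
  have hGenFin : Gen.Finite :=
    (T.finite_toSet).union (hBoxFin.biUnion fun w _ => ((hFfin w).image _))
  have hGenM : Gen ⊆ M := by
    rintro v (hv | hv)
    · exact hAM v (hTA v hv)
    · obtain ⟨w, _, x, hxF, rfl⟩ := by simpa using hv
      exact hxF.1
  refine ⟨hGenFin.toFinset, ?_⟩
  ext v
  constructor
  · intro hv
    have hle : AddSubmonoid.closure (↑hGenFin.toFinset : Set (Fin n → ℤ)) ≤ Msub := by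
      refine AddSubmonoid.closure_le.2 ?_
      rw [Set.Finite.coe_toFinset]
      exact hGenM
    exact hle hv
  · intro hv
    obtain ⟨w, hwB, c, hvwc⟩ := hdecomp v hv.1
    have hx0 : (fun t : {t // t ∈ T} => c t) ∈ J w := by
      show w + ∑ t ∈ T.attach, c (t : Fin n → ℤ) • (t : Fin n → ℤ) ∈ M
      rw [Finset.sum_attach T (fun t => c t • t), ← hvwc]
      exact hv
    obtain ⟨xm, hxmF, hxmle⟩ := hmin w _ hx0
    have hgen : w + ∑ t ∈ T.attach, xm t • (t : Fin n → ℤ) ∈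
        AddSubmonoid.closure (↑hGenFin.toFinset : Set (Fin n → ℤ)) := by
      refine AddSubmonoid.subset_closure ?_
      rw [Set.Finite.coe_toFinset]
      refine Or.inr ?_
      exact Set.mem_biUnion hwB ⟨xm, hxmF, rfl⟩
    have hrest : ∑ t ∈ T.attach, (c (t : Fin n → ℤ) - xm t) • (t : Fin n → ℤ) ∈
        AddSubmonoid.closure (↑hGenFin.toFinset : Set (Fin n → ℤ)) := by
      refine AddSubmonoid.sum_mem _ fun t _ => ?_
      refine nsmul_mem (AddSubmonoid.subset_closure ?_) _
      rw [Set.Finite.coe_toFinset]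
      exact Or.inl t.2
    have hveq : v = (w + ∑ t ∈ T.attach, xm t • (t : Fin n → ℤ)) +
        ∑ t ∈ T.attach, (c (t : Fin n → ℤ) - xm t) • (t : Fin n → ℤ) := by
      rw [add_assoc, ← Finset.sum_add_distrib]
      have : ∑ t ∈ T.attach, (xm t • (t : Fin n → ℤ) +
          (c (t : Fin n → ℤ) - xm t) • (t : Fin n → ℤ)) =
          ∑ t ∈ T.attach, c (t : Fin n → ℤ) • (t : Fin n → ℤ) := by
        refine Finset.sum_congr rfl fun t _ => ?_
        rw [← add_smul, Nat.add_sub_cancel' (hxmle t)]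
      rw [this, Finset.sum_attach T (fun t => c t • t)]
      exact hvwc
    rw [hveq]
    exact AddSubmonoid.add_mem _ hgen hrest
end

section
/- Let A ⊆ ℕ^n be an affine semigroup and let p and q be two distinct primes. Then ⁺A = *pA ∩ *qA, i.e. the seminormalization of A equals the intersection of the p-weak normalization and the q-weak normalization. -/
lemma rep_of_large {m m' : ℕ} (cop : Nat.Coprime m m') (hm : 0 < m) (hm' : 0 < m')
    {N : ℕ} (hN : m * m' ≤ N) : ∃ a b : ℕ, a * m + b * m' = N := by
  rcases eq_or_lt_of_le (show 1 ≤ m from hm) with h1 | h1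
  · exact ⟨N, 0, by simp [← h1]⟩
  rcases eq_or_lt_of_le (show 1 ≤ m' from hm') with h2 | h2
  · exact ⟨0, N, by simp [← h2]⟩
  have := frobeniusNumber_pair cop h1 h2
  have hmem : N ∈ AddSubmonoid.closure ({m, m'} : Set ℕ) := by
    have hpos : 0 < m * m' := Nat.mul_pos hm hm'
    by_contra h
    have h2 := this.2 h
    omega
  rw [AddSubmonoid.mem_closure_pair] at hmem
  obtain ⟨a, b, h⟩ := hmem
  exact ⟨a, b, by simpa [smul_eq_mul] using h⟩

lemma pow_smul_mem {n : ℕ} (A : AddSubmonoid (Fin n → ℤ)) {v : Fin n → ℤ} {m m' : ℕ}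
    (cop : Nat.Coprime m m') (hm : 0 < m) (hm' : 0 < m')
    (hv : m • v ∈ A) (hv' : m' • v ∈ A) {p : ℕ} (hp : 1 < p) :
    ∃ e : ℕ, p ^ e • v ∈ A := by
  refine ⟨m * m', ?_⟩
  have hN : m * m' ≤ p ^ (m * m') := le_of_lt (Nat.lt_pow_self hp)
  obtain ⟨a, b, hab⟩ := rep_of_large cop hm hm' hN
  rw [← hab, add_smul, mul_smul, mul_smul]
  exact A.add_mem (A.nsmul_mem hv a) (A.nsmul_mem hv' b)

/-- for distinct primes `p ≠ q`, `⁺A = *pA ∩ *qA`. -/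
theorem stmt3 (n : ℕ) (A : AddSubmonoid (Fin n → ℤ)) (hFG : A.FG)
    (hnonneg : ∀ v ∈ A, ∀ i, 0 ≤ v i) (p q : ℕ) (hp : p.Prime) (hq : q.Prime)
    (hpq : p ≠ q) :
    seminormalization A = pWeakNormalization A p ∩ pWeakNormalization A q := by
  ext v
  simp only [seminormalization, pWeakNormalization, normalization, Set.mem_setOf_eq,
    Set.mem_inter_iff]
  constructor
  · rintro ⟨hg, m, m', hm, hm', cop, hv, hv'⟩
    exact ⟨⟨⟨hg, m, hm, hv⟩, pow_smul_mem A cop hm hm' hv hv' hp.one_lt⟩,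
      ⟨⟨hg, m, hm, hv⟩, pow_smul_mem A cop hm hm' hv hv' hq.one_lt⟩⟩
  · rintro ⟨⟨⟨hg, -⟩, e, he⟩, ⟨-, f, hf⟩⟩
    exact ⟨hg, p ^ e, q ^ f, pow_pos hp.pos e, pow_pos hq.pos f,
      (Nat.coprime_primes hp hq |>.mpr hpq).pow _ _, he, hf⟩
end

section
/- Let A ⊆ ℕ^n be an affine semigroup and p a prime. Then there exists N₀ ∈ ℕ such that p^{N₀}•v ∈ A for every v ∈ *pA, i.e. p^{N₀}(*pA) ⊆ A. -/
lemma stab_upper_chain {ι : Type} [Fintype ι] (I : ℕ → Set (ι → ℕ)) (hmono : Monotone I)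
    (hup : ∀ e (c c' : ι → ℕ), c ≤ c' → c ∈ I e → c' ∈ I e) : ∃ N, ∀ e, I e ⊆ I N := by
  classical
  set mon : (ι → ℕ) → MvPolynomial ι ℚ :=
    fun c => MvPolynomial.monomial (Finsupp.equivFunOnFinite.symm c) 1 with hmon
  set J : ℕ →o Ideal (MvPolynomial ι ℚ) :=
    ⟨fun e => Ideal.span (mon '' I e),
      fun a b hab => Ideal.span_mono (Set.image_mono (hmono hab))⟩ with hJ
  obtain ⟨N, hN⟩ := monotone_stabilizes_iff_noetherian.mpr inferInstance J
  refine ⟨N, fun e c hc => ?_⟩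
  rcases le_or_gt e N with h | h
  · exact hmono h hc
  · have h1 : mon c ∈ J e := Ideal.subset_span ⟨c, hc, rfl⟩
    rw [← hN e h.le] at h1
    have h1' : mon c ∈ Ideal.span
        ((fun s => MvPolynomial.monomial s (1:ℚ)) '' (Finsupp.equivFunOnFinite.symm '' I N)) := by
      rw [Set.image_image]
      exact h1
    have h2 := MvPolynomial.mem_ideal_span_monomial_image.mp h1'
    have hsupp : (Finsupp.equivFunOnFinite.symm c) ∈ (mon c).support := by
      rw [hmon]
      simp [MvPolynomial.support_monomial]
    obtain ⟨si, hsi, hle⟩ := h2 _ hsupp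
    obtain ⟨c', hc', rfl⟩ := hsi
    refine hup N c' c (fun i => ?_) hc'
    simpa using hle i



/-- there exists `N₀` with `p ^ N₀ • (*pA) ⊆ A`. -/
theorem stmt4 (n : ℕ) (A : AddSubmonoid (Fin n → ℤ)) (hFG : A.FG)
    (hnonneg : ∀ v ∈ A, ∀ i, 0 ≤ v i) (p : ℕ) (hp : p.Prime) :
    ∃ N₀ : ℕ, ∀ v ∈ pWeakNormalization A p, p ^ N₀ • v ∈ A := by
  classical
  obtain ⟨S, hS⟩ := hFG
  set ι := {x : Fin n → ℤ // x ∈ S} with hι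
  set f : (ι → ℕ) → (Fin n → ℤ) := fun c => ∑ x : ι, (c x) • (x : Fin n → ℤ) with hf
  have hgenA : ∀ x : ι, (x : Fin n → ℤ) ∈ A := fun x => by
    rw [← hS]; exact AddSubmonoid.subset_closure x.2
  have hfA : ∀ c, f c ∈ A := fun c =>
    A.sum_mem (fun x _ => A.nsmul_mem (hgenA x) _)
  -- surjectivity onto A
  have hsurj : ∀ v ∈ A, ∃ c, f c = v := by
    let Φ : ((ι → ℕ) →+ (Fin n → ℤ)) :=
      { toFun := f
        map_zero' := Finset.sum_eq_zero fun x _ => zero_smul ℕ _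
        map_add' := by
          intro a b
          show (∑ x : ι, ((a + b) x) • (x : Fin n → ℤ)) = _
          rw [← Finset.sum_add_distrib]
          exact Finset.sum_congr rfl fun x _ => add_smul _ _ _ }
    have hAle : A ≤ AddMonoidHom.mrange Φ := by
      rw [← hS, AddSubmonoid.closure_le]
      intro x hx
      refine ⟨Pi.single ⟨x, hx⟩ 1, ?_⟩
      show (∑ y : ι, (Pi.single (⟨x, hx⟩ : ι) 1 y) • (y : Fin n → ℤ)) = x
      rw [Finset.sum_eq_single_of_mem (⟨x, hx⟩ : ι) (Finset.mem_univ _)]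
      · simp
      · intro b _ hb
        rw [Pi.single_eq_of_ne hb]
        simp
    intro v hv
    obtain ⟨c, hc⟩ := hAle hv
    exact ⟨c, hc⟩
  set B : Fin n → ℤ := fun i => ∑ x : ι, (x : Fin n → ℤ) i with hB
  set T : Set (Fin n → ℤ) := Set.pi Set.univ (fun i => Set.Icc 0 (B i)) with hT
  have hTfin : T.Finite := Set.Finite.pi (fun i => Set.finite_Icc _ _)
  -- decomposition
  have hdec : ∀ (v : Fin n → ℤ) (m : ℕ), 0 < m → m • v ∈ A → ∃ t ∈ T, ∃ c, v = t + f c := by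
    intro v m hm hmv
    obtain ⟨d, hd⟩ := hsurj _ hmv
    set c : ι → ℕ := fun x => d x / m with hc
    have hm' : (0:ℤ) < (m:ℤ) := by exact_mod_cast hm
    have key : ∀ i, (m:ℤ) * ((v - f c) i) = ∑ x : ι, ((d x % m : ℕ) : ℤ) * (x : Fin n → ℤ) i := by
      intro i
      have hdi : (∑ x : ι, (d x : ℤ) * (x : Fin n → ℤ) i) = (m : ℤ) * v i := by
        have := congrFun hd i
        simpa [hf, Finset.sum_apply, Pi.smul_apply, nsmul_eq_mul] using this
      have hfc : (f c) i = ∑ x : ι, ((d x / m : ℕ) : ℤ) * (x : Fin n → ℤ) i := by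
        simp [hf, hc, Finset.sum_apply, nsmul_eq_mul]
      rw [Pi.sub_apply, mul_sub, ← hdi, hfc, Finset.mul_sum, ← Finset.sum_sub_distrib]
      refine Finset.sum_congr rfl (fun x _ => ?_)
      have hmod : (d x : ℤ) = (m:ℤ) * ((d x / m : ℕ) : ℤ) + ((d x % m : ℕ) : ℤ) := by
        exact_mod_cast (Nat.div_add_mod (d x) m).symm
      rw [hmod]; ring
    refine ⟨v - f c, ?_, c, by abel⟩
    rw [hT, Set.mem_pi]
    intro i _
    have h0 : (0:ℤ) ≤ ∑ x : ι, ((d x % m : ℕ):ℤ) * (x : Fin n → ℤ) i :=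
      Finset.sum_nonneg fun x _ => mul_nonneg (Int.natCast_nonneg _) (hnonneg _ (hgenA x) i)
    have h1 : (∑ x : ι, ((d x % m:ℕ):ℤ) * (x : Fin n → ℤ) i) ≤ (m:ℤ) * B i := by
      rw [hB, Finset.mul_sum]
      refine Finset.sum_le_sum fun x _ => mul_le_mul_of_nonneg_right ?_ (hnonneg _ (hgenA x) i)
      exact_mod_cast (Nat.mod_lt _ hm).le
    constructor
    · refine le_of_mul_le_mul_left ?_ hm'
      rw [mul_zero, key i]
      exact h0
    · refine le_of_mul_le_mul_left ?_ hm'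
      rw [key i]
      exact h1
  -- the chains
  set I : (Fin n → ℤ) → ℕ → Set (ι → ℕ) := fun t e => {c | p ^ e • (t + f c) ∈ A} with hI
  have hmonoI : ∀ t, Monotone (I t) := by
    intro t e e' hee' c hc
    simp only [hI, Set.mem_setOf_eq] at hc ⊢
    have heq : p ^ e' • (t + f c) = p ^ (e' - e) • (p ^ e • (t + f c)) := by
      rw [← mul_smul, ← pow_add, Nat.sub_add_cancel hee']
    rw [heq]
    exact A.nsmul_mem hc _
  have hupI : ∀ t e (c c' : ι → ℕ), c ≤ c' → c ∈ I t e → c' ∈ I t e := by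
    intro t e c c' hcc' hcmem
    have hfc : f c' = f c + f (fun x => c' x - c x) := by
      rw [hf, ← Finset.sum_add_distrib]
      refine Finset.sum_congr rfl fun x _ => ?_
      rw [← add_smul, Nat.add_sub_cancel' (hcc' x)]
    simp only [hI, Set.mem_setOf_eq] at hcmem ⊢
    rw [hfc, ← add_assoc, smul_add]
    exact A.add_mem hcmem (A.nsmul_mem (hfA _) _)
  choose Nt hNt using fun t => stab_upper_chain (I t) (hmonoI t) (hupI t)
  refine ⟨hTfin.toFinset.sup Nt, fun v hv => ?_⟩
  obtain ⟨-, e, he⟩ := hv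
  obtain ⟨t, htT, c, rfl⟩ := hdec v (p ^ e) (pow_pos hp.pos e) he
  have hc1 : c ∈ I t e := he
  have hc2 : c ∈ I t (Nt t) := hNt t e hc1
  exact hmonoI t (Finset.le_sup (hTfin.mem_toFinset.mpr htT)) hc2
end

section
/- Let A ⊆ ℕ^n be an affine semigroup, p a prime, and N ∈ ℕ. If ⟦A/p^N⟧ = ⟦A/p^{N+1}⟧, then *pA = ⟦A/p^N⟧. (This is the correctness criterion for the algorithm computing the p-weak normalization.) -/
/-- if `⟦A/p^N⟧ = ⟦A/p^{N+1}⟧` then `*pA = ⟦A/p^N⟧`. -/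
theorem stmt8 (n : ℕ) (A : AddSubmonoid (Fin n → ℤ)) (hFG : A.FG)
    (hnonneg : ∀ v ∈ A, ∀ i, 0 ≤ v i) (p : ℕ) (hp : p.Prime) (N : ℕ)
    (hstab : quotBy A (p ^ N) = quotBy A (p ^ (N + 1))) :
    pWeakNormalization A p = quotBy A (p ^ N) := by
  have key : ∀ k, ∀ v ∈ normalization A, p ^ (N + k) • v ∈ A → p ^ N • v ∈ A := by
    intro k
    induction k with
    | zero => simpa using fun v _ h => h
    | succ k ih =>
      intro v hv hpv
      obtain ⟨hg, m, hm, hmA⟩ := hv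
      have hw : (p • v) ∈ normalization A := by
        refine ⟨AddSubgroup.nsmul_mem _ hg p, m, hm, ?_⟩
        rw [smul_comm m p v]
        exact AddSubmonoid.nsmul_mem A hmA p
      have h1 : p ^ (N + k) • (p • v) ∈ A := by
        rw [smul_smul, ← pow_succ]
        rwa [show N + (k + 1) = N + k + 1 from by omega] at hpv
      have h2 := ih (p • v) hw h1
      have h3 : p ^ (N + 1) • v ∈ A := by
        rw [pow_succ, mul_smul]
        exact h2
      have : v ∈ quotBy A (p ^ (N + 1)) := ⟨⟨hg, m, hm, hmA⟩, h3⟩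
      rw [← hstab] at this
      exact this.2
  ext v
  constructor
  · rintro ⟨hv, e, he⟩
    refine ⟨hv, ?_⟩
    rcases le_or_gt e N with h | h
    · have : p ^ N • v = p ^ (N - e) • (p ^ e • v) := by
        rw [smul_smul, ← pow_add, Nat.sub_add_cancel h]
      rw [this]
      exact AddSubmonoid.nsmul_mem A he _
    · exact key (e - N) v hv (by rwa [show N + (e - N) = e from by omega])
  · rintro ⟨hv, hN⟩
    exact ⟨hv, N, hN⟩
end

section
/- Let A ⊆ ℕ^n be an affine semigroup, p a prime, and k a field of characteristic p. Then the set of elements of k[Ā] having some p^e-th power in k[A] equals k[*pA]; that is, {x ∈ k[Ā] : x^{p^e} ∈ k[A] for some e ∈ ℕ} = k[*pA] as subsets of the Laurent polynomial algebra. (Equivalently, the weak normalization of k[A] is k[*pA].) -/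
/-- For a subset `M ⊆ ℤ^n`, the `k`-linear span of the monomials `x^v` with `v ∈ M`
inside the Laurent polynomial algebra `AddMonoidAlgebra k (ℤ^n)`; when `M` is a
submonoid this is the semigroup algebra `k[M]`, viewed as a set. -/
def monSpan (k : Type*) [CommRing k] {n : ℕ} (M : Set (Fin n → ℤ)) :
    Set (AddMonoidAlgebra k (Fin n → ℤ)) :=
  (Submodule.span k {x : AddMonoidAlgebra k (Fin n → ℤ) |
      ∃ v ∈ M, x = AddMonoidAlgebra.single v (1 : k)} :
    Submodule k (AddMonoidAlgebra k (Fin n → ℤ)))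

lemma mem_monSpan_iff (k : Type*) [CommRing k] {n : ℕ} (M : Set (Fin n → ℤ))
    (x : AddMonoidAlgebra k (Fin n → ℤ)) :
    x ∈ monSpan k M ↔ ↑x.coeff.support ⊆ M := by
  have hset : {x : AddMonoidAlgebra k (Fin n → ℤ) |
      ∃ v ∈ M, x = AddMonoidAlgebra.single v (1 : k)}
      = (fun v => AddMonoidAlgebra.single v (1 : k)) '' M := by
    ext y; constructor
    · rintro ⟨v, hv, rfl⟩; exact ⟨v, hv, rfl⟩
    · rintro ⟨v, hv, rfl⟩; exact ⟨v, hv, rfl⟩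
  have : monSpan k M = (AddMonoidAlgebra.supported k k M : Set (AddMonoidAlgebra k (Fin n → ℤ))) := by
    unfold monSpan
    rw [hset, ← AddMonoidAlgebra.supported_eq_span_single]
  rw [this]
  exact AddMonoidAlgebra.mem_supported

lemma frob_pow (k : Type*) [Field k] {n : ℕ} (p : ℕ) (hp : p.Prime) [CharP k p]
    (x : AddMonoidAlgebra k (Fin n → ℤ)) (e : ℕ) :
    x ^ p ^ e = ∑ v ∈ x.coeff.support, AddMonoidAlgebra.single (p ^ e • v) (x.coeff v ^ p ^ e) := by
  haveI : CharP (AddMonoidAlgebra k (Fin n → ℤ)) p :=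
    charP_of_injective_algebraMap' k p
  haveI : ExpChar (AddMonoidAlgebra k (Fin n → ℤ)) p := ExpChar.prime hp
  have hx : x = ∑ v ∈ x.coeff.support, AddMonoidAlgebra.single v (x.coeff v) := by
    conv_lhs => rw [← AddMonoidAlgebra.sum_coeff_single x]
    rfl
  conv_lhs => rw [hx]
  rw [← iterateFrobenius_def (p := p), map_sum]
  refine Finset.sum_congr rfl fun v _ => ?_
  rw [iterateFrobenius_def, AddMonoidAlgebra.single_pow]

lemma pow_coeff (k : Type*) [Field k] {n : ℕ} (p : ℕ) (hp : p.Prime) [CharP k p]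
    (x : AddMonoidAlgebra k (Fin n → ℤ)) (e : ℕ) (v : Fin n → ℤ) :
    (x ^ p ^ e).coeff (p ^ e • v) = x.coeff v ^ p ^ e := by
  have hinj : ∀ w : Fin n → ℤ, p ^ e • w = p ^ e • v → w = v := by
    intro w hw
    rw [← Nat.cast_smul_eq_nsmul ℤ, ← Nat.cast_smul_eq_nsmul ℤ] at hw
    have hne : ((p ^ e : ℕ) : ℤ) ≠ 0 := by
      exact_mod_cast (pow_pos hp.pos e).ne'
    exact smul_right_injective (Fin n → ℤ) hne hw
  rw [frob_pow k p hp x e, AddMonoidAlgebra.coeff_sum, Finset.sum_apply']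
  simp only [AddMonoidAlgebra.coeff_single]
  by_cases hv : v ∈ x.coeff.support
  · rw [Finset.sum_eq_single v]
    · simp [Finsupp.single_apply]
    · intro w hw hwv
      rw [Finsupp.single_apply, if_neg (fun h => hwv (hinj w h))]
    · intro h; exact absurd hv h
  · have hxv : x.coeff v = 0 := Finsupp.notMem_support_iff.mp hv
    rw [hxv, zero_pow (pow_pos hp.pos e).ne']
    apply Finset.sum_eq_zero
    intro w hw
    rw [Finsupp.single_apply, if_neg (fun h => hv (hinj w h ▸ hw))]

/-- over a field `k` of characteristic `p`, the set of elements of `k[Ā]`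
having some `p^e`-th power in `k[A]` equals `k[*pA]`, i.e. the weak normalization of
`k[A]` is `k[*pA]`. -/
theorem stmt9 (n : ℕ) (A : AddSubmonoid (Fin n → ℤ)) (hFG : A.FG)
    (hnonneg : ∀ v ∈ A, ∀ i, 0 ≤ v i)
    (p : ℕ) (hp : p.Prime)
    (k : Type*) [Field k] [CharP k p] :
    {x : AddMonoidAlgebra k (Fin n → ℤ) |
        x ∈ monSpan k (normalization A) ∧
        ∃ e : ℕ, x ^ p ^ e ∈ monSpan k (A : Set (Fin n → ℤ))} =
      monSpan k (pWeakNormalization A p) := by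
  ext x
  simp only [Set.mem_setOf_eq, mem_monSpan_iff]
  constructor
  · rintro ⟨h1, e, h2⟩ v hv
    refine ⟨h1 hv, e, ?_⟩
    have hcoeff : (x ^ p ^ e).coeff (p ^ e • v) ≠ 0 := by
      rw [pow_coeff k p hp x e v]
      exact pow_ne_zero _ (Finsupp.mem_support_iff.mp hv)
    exact h2 (Finsupp.mem_support_iff.mpr hcoeff)
  · intro h
    refine ⟨fun v hv => (h hv).1, ?_⟩
    have hchoice : ∀ v ∈ x.coeff.support, ∃ e : ℕ, p ^ e • v ∈ A := fun v hv => (h hv).2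
    choose f hf using hchoice
    classical
    refine ⟨x.coeff.support.attach.sup (fun v => f v.1 v.2), ?_⟩
    set E := x.coeff.support.attach.sup (fun v => f v.1 v.2) with hE
    have hall : ∀ v ∈ x.coeff.support, p ^ E • v ∈ A := by
      intro v hv
      have hle : f v hv ≤ E := Finset.le_sup (f := fun w : {w // w ∈ x.coeff.support} => f w.1 w.2) (Finset.mem_attach _ ⟨v, hv⟩)
      have : p ^ E • v = p ^ (E - f v hv) • (p ^ (f v hv) • v) := by
        rw [smul_smul, ← pow_add, Nat.sub_add_cancel hle]
      rw [this]
      exact AddSubmonoid.nsmul_mem A (hf v hv) _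
    rw [frob_pow k p hp x E, AddMonoidAlgebra.coeff_sum]
    simp only [AddMonoidAlgebra.coeff_single]
    refine Set.Subset.trans (Finset.coe_subset.mpr (Finsupp.support_finset_sum)) ?_
    intro w hw
    simp only [Finset.coe_biUnion, Set.mem_iUnion] at hw
    obtain ⟨v, hv, hw⟩ := hw
    have := Finsupp.support_single_subset hw
    simp only [Finset.mem_singleton] at this
    subst this
    exact hall v hv
end

section
/- Let A ⊆ ℕ^n be an affine semigroup and suppose Ā = *pA for some prime p. Then either *qA = ⁺A for every prime q ≠ p, or *qA = Ā for every prime q ≠ p. -/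
lemma aux_comb {m m' : ℕ} (cop : Nat.Coprime m m') (hm : 0 < m) (hm' : 0 < m')
    (N : ℕ) (hN : m * m' ≤ N) : ∃ a b : ℕ, a * m + b * m' = N := by
  rcases eq_or_lt_of_le (show 1 ≤ m from hm) with h1 | h1
  · exact ⟨N, 0, by simp [← h1]⟩
  rcases eq_or_lt_of_le (show 1 ≤ m' from hm') with h2 | h2
  · exact ⟨0, N, by simp [← h2]⟩
  have hF := (frobeniusNumber_pair cop h1 h2).2
  have : N ∈ AddSubmonoid.closure ({m, m'} : Set ℕ) := by
    by_contra hc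
    have h3 := hF hc
    have h4 : m + m' ≤ m * m' := Nat.add_le_mul h1 h2
    omega
  rw [AddSubmonoid.mem_closure_pair] at this
  obtain ⟨a, b, hab⟩ := this
  exact ⟨a, b, by simpa [smul_eq_mul] using hab⟩

/-- if `Ā = *pA` for some prime `p`, then either `*qA = ⁺A` for every
prime `q ≠ p`, or `*qA = Ā` for every prime `q ≠ p`. -/
theorem stmt10 (n : ℕ) (A : AddSubmonoid (Fin n → ℤ)) (hFG : A.FG)
    (hnonneg : ∀ v ∈ A, ∀ i, 0 ≤ v i) (p : ℕ) (hp : p.Prime)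
    (h : normalization A = pWeakNormalization A p) :
    (∀ q : ℕ, q.Prime → q ≠ p → pWeakNormalization A q = seminormalization A) ∨
    (∀ q : ℕ, q.Prime → q ≠ p → pWeakNormalization A q = normalization A) := by
  left
  intro q hq hqp
  ext v
  constructor
  · rintro ⟨hnorm, e, hqe⟩
    have hp2 : v ∈ pWeakNormalization A p := h ▸ hnorm
    obtain ⟨-, e', hpe⟩ := hp2
    refine ⟨hnorm.1, q ^ e, p ^ e', pow_pos hq.pos e, pow_pos hp.pos e', ?_, hqe, hpe⟩
    exact Nat.Coprime.pow _ _ ((Nat.coprime_primes hq hp).2 hqp)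
  · rintro ⟨hG, m, m', hm, hm', cop, hmA, hm'A⟩
    have hnorm : v ∈ normalization A := ⟨hG, m, hm, hmA⟩
    refine ⟨hnorm, ?_⟩
    obtain ⟨e, he⟩ := pow_unbounded_of_one_lt (m * m') hq.one_lt
    obtain ⟨a, b, hab⟩ := aux_comb cop hm hm' (q ^ e) he.le
    refine ⟨e, ?_⟩
    have : (a * m + b * m') • v = a • (m • v) + b • (m' • v) := by
      rw [add_smul, mul_smul, mul_smul]
    rw [← hab, this]
    exact A.add_mem (A.nsmul_mem hmA a) (A.nsmul_mem hm'A b)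
end

section
/- Let A ⊆ ℕ^n be an affine semigroup. Then the set of primes p for which *pA ≠ ⁺A is finite. -/
section Aux

variable {n : ℕ} (A : AddSubmonoid (Fin n → ℤ))

/-- Decomposition: every element of the normalization is (elt of A) + (elt of a bounded box
    having a positive multiple in A). -/
lemma decomp_normalization (S : Finset (Fin n → ℤ))
    (hS : AddSubmonoid.closure (↑S : Set (Fin n → ℤ)) = A)
    (hnonneg : ∀ v ∈ A, ∀ i, 0 ≤ v i)
    (v : Fin n → ℤ) (hv : v ∈ normalization A) :
    ∃ f : Fin n → ℤ, (∀ j, 0 ≤ f j ∧ f j ≤ ∑ a ∈ S, a j) ∧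
      (∃ m : ℕ, 0 < m ∧ m • f ∈ A) ∧ v - f ∈ A := by
  obtain ⟨-, m, hm, hmv⟩ := hv
  have haS : ∀ a ∈ S, a ∈ A := fun a ha => hS ▸ AddSubmonoid.subset_closure ha
  have hspan : m • v ∈ Submodule.span ℕ (↑S : Set (Fin n → ℤ)) := by
    show m • v ∈ (Submodule.span ℕ (↑S : Set (Fin n → ℤ))).toAddSubmonoid
    rw [Submodule.span_nat_eq_addSubmonoidClosure]; exact hS ▸ hmv
  obtain ⟨c, -, hc⟩ := Submodule.mem_span_finset.mp hspan
  set w : Fin n → ℤ := ∑ a ∈ S, (c a / m) • a with hw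
  have hwA : w ∈ A :=
    AddSubmonoid.sum_mem A fun a ha => AddSubmonoid.nsmul_mem A (haS a ha) _
  have hkey : m • (v - w) = ∑ a ∈ S, (c a % m) • a := by
    have h1 : m • w = ∑ a ∈ S, (m * (c a / m)) • a := by
      rw [hw, Finset.smul_sum]
      exact Finset.sum_congr rfl fun a _ => (mul_smul m (c a / m) a).symm
    have h2 : (∑ a ∈ S, (c a % m) • a) + m • w = m • v := by
      rw [h1, ← Finset.sum_add_distrib, ← hc]
      refine Finset.sum_congr rfl fun a _ => ?_
      rw [← add_smul, Nat.mod_add_div]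
    rw [smul_sub, sub_eq_iff_eq_add]
    exact h2.symm
  have hfA : m • (v - w) ∈ A := by
    rw [hkey, ← hS]
    exact AddSubmonoid.sum_mem _ fun a ha =>
      AddSubmonoid.nsmul_mem _ (AddSubmonoid.subset_closure ha) _
  refine ⟨v - w, fun j => ?_, ⟨m, hm, hfA⟩, by simpa using hwA⟩
  have hcoord : (m : ℤ) * (v - w) j = ∑ a ∈ S, ((c a % m : ℕ) : ℤ) * a j := by
    have := congrFun hkey j
    simpa [Finset.sum_apply, nsmul_eq_mul] using this
  have hmZ : (0 : ℤ) < (m : ℤ) := by exact_mod_cast hm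
  constructor
  · have h0 : (0 : ℤ) ≤ (m : ℤ) * (v - w) j := by
      rw [hcoord]
      exact Finset.sum_nonneg fun a ha =>
        mul_nonneg (Int.natCast_nonneg _) (hnonneg a (haS a ha) j)
    nlinarith [h0]
  · have hub : (m : ℤ) * (v - w) j ≤ (m : ℤ) * ∑ a ∈ S, a j := by
      rw [hcoord, Finset.mul_sum]
      refine Finset.sum_le_sum fun a ha => ?_
      refine mul_le_mul_of_nonneg_right ?_ (hnonneg a (haS a ha) j)
      exact_mod_cast Nat.le_of_lt (Nat.mod_lt _ hm)
    exact le_of_mul_le_mul_left hub hmZ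

/-- There is a single positive integer `M` with `M • v ∈ A` for every `v` in the
normalization. -/
lemma exists_uniform_multiplier (hFG : A.FG)
    (hnonneg : ∀ v ∈ A, ∀ i, 0 ≤ v i) :
    ∃ M : ℕ, 0 < M ∧ ∀ v ∈ normalization A, M • v ∈ A := by
  obtain ⟨S, hS⟩ := hFG
  set Box : Set (Fin n → ℤ) := Set.univ.pi (fun j => Set.Icc 0 (∑ a ∈ S, a j)) with hBoxdef
  have hBox : Box.Finite := Set.Finite.pi fun j => Set.finite_Icc _ _
  classical
  have key : ∀ x : Fin n → ℤ, ∃ m : ℕ, 0 < m ∧ ((∃ m' : ℕ, 0 < m' ∧ m' • x ∈ A) → m • x ∈ A) := by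
    intro x
    by_cases h : ∃ m' : ℕ, 0 < m' ∧ m' • x ∈ A
    · exact ⟨h.choose, h.choose_spec.1, fun _ => h.choose_spec.2⟩
    · exact ⟨1, Nat.one_pos, fun h' => absurd h' h⟩
  choose mFun hmFun_pos hmFun_mem using key
  refine ⟨∏ x ∈ hBox.toFinset, mFun x, Finset.prod_pos fun x _ => hmFun_pos x, ?_⟩
  intro v hv
  obtain ⟨f, hfBox, hfP, hvw⟩ := decomp_normalization A S hS hnonneg v hv
  have hfBox' : f ∈ hBox.toFinset := by
    rw [Set.Finite.mem_toFinset, hBoxdef]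
    intro j _
    exact ⟨(hfBox j).1, (hfBox j).2⟩
  obtain ⟨k, hk⟩ : mFun f ∣ ∏ x ∈ hBox.toFinset, mFun x :=
    Finset.dvd_prod_of_mem mFun hfBox'
  have hMf : (∏ x ∈ hBox.toFinset, mFun x) • f ∈ A := by
    rw [hk, mul_comm, mul_smul]
    exact AddSubmonoid.nsmul_mem A (hmFun_mem f hfP) k
  have : (∏ x ∈ hBox.toFinset, mFun x) • v
      = (∏ x ∈ hBox.toFinset, mFun x) • (v - f) + (∏ x ∈ hBox.toFinset, mFun x) • f := by
    rw [← smul_add, sub_add_cancel]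
  rw [this]
  exact AddSubmonoid.add_mem A (AddSubmonoid.nsmul_mem A hvw _) hMf

/-- The seminormalization is contained in every `p`-weak normalization, `p` prime. -/
lemma semi_subset_pweak {p : ℕ} (hp : p.Prime) :
    seminormalization A ⊆ pWeakNormalization A p := by
  rintro v ⟨hcl, m, m', hm, hm', hcop, h1, h2⟩
  refine ⟨⟨hcl, m, hm, h1⟩, ?_⟩
  rcases eq_or_lt_of_le (Nat.one_le_of_lt hm) with hm1 | hm1
  · exact ⟨0, by simpa [← hm1] using h1⟩
  rcases eq_or_lt_of_le (Nat.one_le_of_lt hm') with hm'1 | hm'1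
  · exact ⟨0, by simpa [← hm'1] using h2⟩
  -- now 1 < m and 1 < m'
  have hple : m * m' ≤ p ^ (m * m') := by
    calc m * m' ≤ 2 ^ (m * m') := Nat.le_of_lt Nat.lt_two_pow_self
    _ ≤ p ^ (m * m') := Nat.pow_le_pow_left hp.two_le _
  have hmem : p ^ (m * m') ∈ AddSubmonoid.closure ({m, m'} : Set ℕ) := by
    by_contra hnot
    have h3 := (frobeniusNumber_pair hcop hm1 hm'1).2 hnot
    have h4 : m + m' ≤ m * m' := Nat.add_le_mul hm1 hm'1
    omega
  obtain ⟨a, b, hab⟩ := (AddSubmonoid.mem_closure_pair m m' _).mp hmem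
  refine ⟨m * m', ?_⟩
  have : p ^ (m * m') • v = a • (m • v) + b • (m' • v) := by
    rw [← hab, add_smul, smul_eq_mul, smul_eq_mul, mul_smul, mul_smul]
  rw [this]
  exact AddSubmonoid.add_mem A (AddSubmonoid.nsmul_mem A h1 a) (AddSubmonoid.nsmul_mem A h2 b)

end Aux

/-- the set of primes `p` with `*pA ≠ ⁺A` is finite. -/
theorem stmt14 (n : ℕ) (A : AddSubmonoid (Fin n → ℤ)) (hFG : A.FG)
    (hnonneg : ∀ v ∈ A, ∀ i, 0 ≤ v i) :
    {p : ℕ | p.Prime ∧ pWeakNormalization A p ≠ seminormalization A}.Finite := by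
  obtain ⟨M, hMpos, hM⟩ := exists_uniform_multiplier A hFG hnonneg
  have hsub : {p : ℕ | p.Prime ∧ pWeakNormalization A p ≠ seminormalization A} ⊆ Set.Iic M := by
    rintro p ⟨hp, hne⟩
    by_contra hgt
    have hndvd : ¬ p ∣ M := fun hd => hgt (Nat.le_of_dvd hMpos hd)
    apply hne
    refine Set.Subset.antisymm ?_ (semi_subset_pweak A hp)
    rintro v ⟨hvN, e, he⟩
    refine ⟨hvN.1, M, p ^ e, hMpos, Nat.pow_pos hp.pos, ?_, hM v hvN, he⟩
    exact (Nat.Coprime.pow_right e ((hp.coprime_iff_not_dvd.mpr hndvd).symm))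
  exact (Set.finite_Iic M).subset hsub
end

section
/- Let A ⊆ ℕ^n be an affine semigroup, p a prime, and S ⊆ {1,…,s} a subset of the generators with F = F_S. Suppose v ∈ G(A) has image in ℝ^n lying in the ℝ-linear span of {a_i : i ∈ S}, with v ∉ G(A ∩ F) and p•v ∈ G(A ∩ F). Then there exists v' ∈ G(A) whose image lies in int(F), with v' ∉ G(A ∩ F) and p•v' ∈ G(A ∩ F). -/
/-- The face `F_S` of the cone `C(A)`: all `ℝ≥0`-linear combinations of `{a i : i ∈ S}`. -/
def face {n s : ℕ} (a : Fin s → (Fin n → ℤ)) (S : Finset (Fin s)) : Set (Fin n → ℝ) :=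
  {x | ∃ c : Fin s → ℝ, (∀ i, 0 ≤ c i) ∧ x = ∑ i ∈ S, c i • toR (a i)}

/-- The interior `int(F_S)` of the face `F_S`: all strictly positive `ℝ`-linear
combinations of `{a i : i ∈ S}`. -/
def faceInt {n s : ℕ} (a : Fin s → (Fin n → ℤ)) (S : Finset (Fin s)) : Set (Fin n → ℝ) :=
  {x | ∃ c : Fin s → ℝ, (∀ i ∈ S, 0 < c i) ∧ x = ∑ i ∈ S, c i • toR (a i)}

/-- `G(A ∩ F_S)`: the subgroup of `ℤ^n` generated by the elements of `A`
whose image in `ℝ^n` lies in the face `F_S`. -/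
def faceGroup {n s : ℕ} (A : AddSubmonoid (Fin n → ℤ)) (a : Fin s → (Fin n → ℤ))
    (S : Finset (Fin s)) : AddSubgroup (Fin n → ℤ) :=
  AddSubgroup.closure {v | v ∈ A ∧ toR v ∈ face a S}

/-- moving a witness into the interior of the face. -/
theorem stmt15 (n s : ℕ) (a : Fin s → (Fin n → ℤ)) (A : AddSubmonoid (Fin n → ℤ))
    (hgen : A = AddSubmonoid.closure (Set.range a))
    (hnonneg : ∀ v ∈ A, ∀ i, 0 ≤ v i)
    (p : ℕ) (hp : p.Prime) (S : Finset (Fin s)) (v : Fin n → ℤ)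
    (hv : v ∈ AddSubgroup.closure (A : Set (Fin n → ℤ)))
    (hspan : toR v ∈ Submodule.span ℝ (toR '' (a '' (S : Set (Fin s)))))
    (hvnot : v ∉ faceGroup A a S)
    (hpv : p • v ∈ faceGroup A a S) :
    ∃ v' : Fin n → ℤ,
      v' ∈ AddSubgroup.closure (A : Set (Fin n → ℤ)) ∧
      toR v' ∈ faceInt a S ∧
      v' ∉ faceGroup A a S ∧
      p • v' ∈ faceGroup A a S := by
  classical
  -- every generator lies in A
  have ha_mem : ∀ i, a i ∈ A := by
    intro i; rw [hgen]; exact AddSubmonoid.subset_closure (Set.mem_range_self i)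
  -- w = sum of generators in S
  set w : Fin n → ℤ := ∑ i ∈ S, a i with hw
  have hwA : w ∈ A := A.sum_mem (fun i _ => ha_mem i)
  have htoR_w : toR w = ∑ i ∈ S, toR (a i) := by
    funext j
    simp [toR, hw, Finset.sum_apply]
  -- each generator in S is in the face generating set
  have hgenface : ∀ i ∈ S, a i ∈ {u | u ∈ A ∧ toR u ∈ face a S} := by
    intro i hi
    refine ⟨ha_mem i, ⟨fun j => if j = i then 1 else 0, fun j => by positivity, ?_⟩⟩
    simp only [ite_smul, one_smul, zero_smul]
    simp [Finset.sum_ite_eq' S i (fun j => toR (a j)), hi]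
  have hwF : w ∈ faceGroup A a S :=
    AddSubgroup.sum_mem _ (fun i hi => AddSubgroup.subset_closure (hgenface i hi))
  -- coefficients from span membership
  rw [Set.image_image] at hspan
  rw [Finsupp.mem_span_image_iff_linearCombination] at hspan
  obtain ⟨l, hlsupp, hl⟩ := hspan
  have hsum : toR v = ∑ i ∈ S, l i • toR (a i) := by
    rw [← hl, Finsupp.linearCombination_apply, Finsupp.sum]
    exact Finset.sum_subset ((Finsupp.mem_supported ℝ l).mp hlsupp) (fun i _ hi => by
      simp [Finsupp.notMem_support_iff.mp hi])
  -- choose N large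
  obtain ⟨N, hN⟩ := exists_nat_gt (∑ i ∈ S, |l i|)
  have hNi : ∀ i ∈ S, 0 < l i + N := by
    intro i hi
    have h1 : |l i| ≤ ∑ j ∈ S, |l j| :=
      Finset.single_le_sum (fun j _ => abs_nonneg (l j)) hi
    have := neg_abs_le (l i)
    linarith
  refine ⟨v + N • w, ?_, ?_, ?_, ?_⟩
  · exact AddSubgroup.add_mem _ hv (AddSubgroup.nsmul_mem _ (AddSubgroup.subset_closure hwA) N)
  · refine ⟨fun i => l i + N, hNi, ?_⟩
    have htoR_add : toR (v + N • w) = toR v + (N : ℝ) • toR w := by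
      funext j; simp [toR]
    rw [htoR_add, hsum, htoR_w, Finset.smul_sum, ← Finset.sum_add_distrib]
    exact Finset.sum_congr rfl (fun i _ => by rw [add_smul])
  · intro hmem
    apply hvnot
    have : v + N • w - N • w ∈ faceGroup A a S :=
      AddSubgroup.sub_mem _ hmem (AddSubgroup.nsmul_mem _ hwF N)
    simpa using this
  · have : p • (v + N • w) = p • v + (p * N) • w := by
      rw [smul_add, mul_smul]
    rw [this]
    exact AddSubgroup.add_mem _ hpv (AddSubgroup.nsmul_mem _ hwF _)
end

section
/- Let A ⊆ ℕ^n be an affine semigroup, k a field of characteristic p > 0, and N₀ ∈ ℕ such that p^{N₀}•v ∈ A for every v ∈ *pA. Then for every ideal I of k[A], the Frobenius test exponent of I is at most N₀: for every x ∈ k[A], if x^{p^e} ∈ I^{[p^e]} for some e ∈ ℕ, then x^{p^{N₀}} ∈ I^{[p^{N₀}]}. -/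
/-- For a subset `M ⊆ ℤ^n`, the `k`-subalgebra of the Laurent polynomial algebra
`AddMonoidAlgebra k (ℤ^n)` spanned by the monomials `x^v` with `v ∈ M`; when `M` is a
submonoid this is the semigroup algebra `k[M]`. -/
noncomputable def monAlg (k : Type*) [CommRing k] {n : ℕ} (M : Set (Fin n → ℤ)) :
    Subalgebra k (AddMonoidAlgebra k (Fin n → ℤ)) :=
  Algebra.adjoin k {x : AddMonoidAlgebra k (Fin n → ℤ) |
    ∃ v ∈ M, x = AddMonoidAlgebra.single v (1 : k)}

/-! ### Auxiliary lemmas -/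

set_option synthInstance.maxHeartbeats 800000 in
theorem exists_theta (k : Type*) [Field k] (p : ℕ) (hp : p.Prime) [CharP k p] (m : ℕ) :
    ∃ θ : k → k, θ 1 = 1 ∧ (∀ a b, θ (a + b) = θ a + θ b) ∧
      (∀ a c, θ (a ^ p ^ m * c) = a * θ c) := by
  haveI : ExpChar k p := ExpChar.prime hp
  let φ : k →+* k := iterateFrobenius k p m
  have hinj : Function.Injective φ := iterateFrobenius_inj k p m
  let F : Subfield k := φ.fieldRange
  let M : Submodule ↥F k := Submodule.span ↥F {(1 : k)}
  obtain ⟨N, hN⟩ := Submodule.exists_isCompl M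
  let π := Submodule.linearProjOfIsCompl M N hN
  have hmem : ∀ c : k, ∃ d : k, φ d = ↑(π c) := by
    intro c
    obtain ⟨a, ha⟩ := Submodule.mem_span_singleton.mp (π c).2
    obtain ⟨d, hd⟩ := RingHom.mem_fieldRange.mp a.2
    refine ⟨d, ?_⟩
    rw [← ha]
    show φ d = (a : k) * 1
    rw [mul_one]; exact hd
  choose θ hθ using hmem
  have hproj : ∀ y : k, y ∈ M → (↑(π y) : k) = y := fun y hy =>
    congrArg _ (Submodule.linearProjOfIsCompl_apply_left hN ⟨y, hy⟩)
  have hMmem : ∀ a : k, φ a ∈ M := by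
    intro a
    refine Submodule.mem_span_singleton.mpr ⟨⟨φ a, RingHom.mem_fieldRange.mpr ⟨a, rfl⟩⟩, ?_⟩
    show (φ a) * 1 = φ a
    exact mul_one _
  refine ⟨θ, ?_, ?_, ?_⟩
  · apply hinj
    rw [hθ, hproj 1 (by simpa using hMmem 1)]
    exact (map_one φ).symm
  · intro a b; apply hinj
    rw [map_add, hθ, hθ, hθ, map_add, Submodule.coe_add]
  · intro a c; apply hinj
    rw [map_mul, hθ, hθ]
    set s : ↥F := ⟨φ a, RingHom.mem_fieldRange.mpr ⟨a, rfl⟩⟩ with hs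
    have hsm : (a ^ p ^ m) * c = s • c := rfl
    rw [hsm]
    have h2 : π (s • c) = s • π c := map_smul π s c
    rw [h2]
    rfl

theorem mem_monAlg_of_support {k : Type*} [CommRing k] {n : ℕ} (M : Set (Fin n → ℤ))
    (y : AddMonoidAlgebra k (Fin n → ℤ)) (h : ↑y.coeff.support ⊆ M) : y ∈ monAlg k M := by
  classical
  rw [monAlg, ← AddMonoidAlgebra.sum_coeff_single y, Finsupp.sum]
  refine Subalgebra.sum_mem _ (fun v hv => ?_)
  have h1 : (AddMonoidAlgebra.single v (y.coeff v) : AddMonoidAlgebra k (Fin n → ℤ))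
      = (y.coeff v) • AddMonoidAlgebra.single v (1 : k) := by
    rw [AddMonoidAlgebra.smul_single', mul_one]
  rw [h1]
  refine Subalgebra.smul_mem _ (Algebra.subset_adjoin ?_) _
  exact ⟨v, h hv, rfl⟩

theorem support_subset_of_mem_monAlg {k : Type*} [CommRing k] {n : ℕ} (M : Set (Fin n → ℤ))
    (h0 : (0 : Fin n → ℤ) ∈ M) (hadd : ∀ a ∈ M, ∀ b ∈ M, a + b ∈ M)
    (y : AddMonoidAlgebra k (Fin n → ℤ)) (hy : y ∈ monAlg k M) :
    ↑y.coeff.support ⊆ M := by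
  classical
  rw [monAlg] at hy
  let W : Subalgebra k (AddMonoidAlgebra k (Fin n → ℤ)) :=
  { carrier := {z : AddMonoidAlgebra k (Fin n → ℤ) | ↑z.coeff.support ⊆ M}
    add_mem' := by
      intro a b ha hb v hv
      rcases Finset.mem_union.mp (Finsupp.support_add (g₁ := a.coeff) (g₂ := b.coeff) hv) with h | h
      · exact ha h
      · exact hb h
    mul_mem' := by
      intro a b ha hb v hv
      obtain ⟨y₁, hy₁, y₂, hy₂, rfl⟩ := Finset.mem_add.mp (AddMonoidAlgebra.support_coeff_mul_subset a b hv)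
      exact hadd _ (ha hy₁) _ (hb hy₂)
    one_mem' := by
      intro v hv
      rw [AddMonoidAlgebra.one_def, AddMonoidAlgebra.coeff_single] at hv
      have := Finsupp.support_single_subset hv
      rw [Finset.mem_singleton] at this
      rw [this]; exact h0
    algebraMap_mem' := by
      intro r v hv
      rw [Algebra.algebraMap_eq_smul_one, AddMonoidAlgebra.coeff_smul] at hv
      have h2 := Finsupp.support_smul hv
      rw [AddMonoidAlgebra.one_def, AddMonoidAlgebra.coeff_single] at h2
      have := Finsupp.support_single_subset h2
      rw [Finset.mem_singleton] at this
      rw [this]; exact h0 }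
  refine Algebra.adjoin_le (S := W) ?_ hy
  rintro z ⟨v, hvM, rfl⟩
  intro u hu
  rw [AddMonoidAlgebra.coeff_single] at hu
  have := Finsupp.support_single_subset hu
  rw [Finset.mem_singleton] at this
  rw [this]; exact hvM

theorem algebraMap_monAlg_injective {k : Type*} [Field k] {n : ℕ} :
    Function.Injective (algebraMap k (AddMonoidAlgebra k (Fin n → ℤ))) := by
  have hsingle : ∀ a : k, algebraMap k (AddMonoidAlgebra k (Fin n → ℤ)) a
      = AddMonoidAlgebra.single 0 a := by
    intro a
    rw [Algebra.algebraMap_eq_smul_one, AddMonoidAlgebra.one_def]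
    rw [AddMonoidAlgebra.smul_single', mul_one]
  intro a b hab
  rw [hsingle, hsingle] at hab
  exact AddMonoidAlgebra.single_right_inj.mp hab

/-- Transport an additive map on coefficient functions to the algebra. -/
noncomputable def onCoeff {k : Type*} [Semiring k] {n : ℕ}
    (f : ((Fin n → ℤ) →₀ k) →+ ((Fin n → ℤ) →₀ k)) :
    AddMonoidAlgebra k (Fin n → ℤ) →+ AddMonoidAlgebra k (Fin n → ℤ) :=
  AddMonoidAlgebra.coeffAddEquiv.symm.toAddMonoidHom.comp
    (f.comp AddMonoidAlgebra.coeffAddEquiv.toAddMonoidHom)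

/-- The coefficientwise Frobenius on the Laurent polynomial algebra. -/
noncomputable def sig (k : Type*) [CommSemiring k] (p : ℕ) [ExpChar k p] {n : ℕ} (e : ℕ) :
    AddMonoidAlgebra k (Fin n → ℤ) →+ AddMonoidAlgebra k (Fin n → ℤ) :=
  onCoeff (Finsupp.mapRange.addMonoidHom (iterateFrobenius k p e).toAddMonoidHom)

theorem sig_apply {k : Type*} [CommSemiring k] (p : ℕ) [ExpChar k p] {n : ℕ} (e : ℕ)
    (y : AddMonoidAlgebra k (Fin n → ℤ)) (v : Fin n → ℤ) :
    (sig k p e y).coeff v = (y.coeff v) ^ p ^ e := rfl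

theorem sig_support {k : Type*} [CommSemiring k] (p : ℕ) [ExpChar k p] {n : ℕ} (e : ℕ)
    (y : AddMonoidAlgebra k (Fin n → ℤ)) : (sig k p e y).coeff.support ⊆ y.coeff.support := by
  intro v hv
  rw [Finsupp.mem_support_iff] at hv ⊢
  intro h
  exact hv (by rw [sig_apply, h, zero_pow (pow_pos (expChar_pos k p) e).ne'])

theorem pow_char_expand {k : Type*} [Field k] {n : ℕ} (p : ℕ) (hp : p.Prime) [CharP k p]
    [ExpChar k p] (m : ℕ) (y : AddMonoidAlgebra k (Fin n → ℤ)) :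
    y ^ p ^ m = AddMonoidAlgebra.mapDomain (fun v => p ^ m • v) (sig k p m y) := by
  classical
  haveI : CharP (AddMonoidAlgebra k (Fin n → ℤ)) p :=
    charP_of_injective_algebraMap algebraMap_monAlg_injective p
  haveI : ExpChar (AddMonoidAlgebra k (Fin n → ℤ)) p := ExpChar.prime hp
  induction y using AddMonoidAlgebra.induction_linear with
  | zero => rw [map_zero, AddMonoidAlgebra.mapDomain_zero, zero_pow (pow_ne_zero m hp.ne_zero)]
  | add f g hf hg => rw [add_pow_expChar_pow, hf, hg, map_add, AddMonoidAlgebra.mapDomain_add]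
  | single a b =>
    rw [AddMonoidAlgebra.single_pow]
    have h1 : sig k p m (AddMonoidAlgebra.single a b) = AddMonoidAlgebra.single a (b ^ p ^ m) := by
      ext v
      rw [sig_apply, AddMonoidAlgebra.coeff_single, AddMonoidAlgebra.coeff_single,
        Finsupp.single_apply, Finsupp.single_apply]
      by_cases h : a = v
      · rw [if_pos h, if_pos h]
      · rw [if_neg h, if_neg h, zero_pow (pow_ne_zero m hp.ne_zero)]
    rw [h1, AddMonoidAlgebra.mapDomain_single]

theorem sig_comm_sig {k : Type*} [CommSemiring k] (p : ℕ) [ExpChar k p] {n : ℕ} (e f : ℕ)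
    (y : AddMonoidAlgebra k (Fin n → ℤ)) :
    sig k p e (sig k p f y) = sig k p f (sig k p e y) := by
  ext v
  rw [sig_apply, sig_apply, sig_apply, sig_apply]
  exact pow_right_comm _ _ _

theorem sig_mapDomain {k : Type*} [CommSemiring k] (p : ℕ) [ExpChar k p] {n : ℕ} (e : ℕ)
    (f : (Fin n → ℤ) → (Fin n → ℤ)) (y : AddMonoidAlgebra k (Fin n → ℤ)) :
    sig k p e (AddMonoidAlgebra.mapDomain f y) = AddMonoidAlgebra.mapDomain f (sig k p e y) :=
  AddMonoidAlgebra.coeff_injective (Finsupp.mapDomain_mapRange f y.coeff (⇑(iterateFrobenius k p e).toAddMonoidHom) (map_zero _)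
    (map_add _)).symm

theorem sig_pow {k : Type*} [Field k] {n : ℕ} (p : ℕ) (hp : p.Prime) [CharP k p]
    [ExpChar k p] (e N : ℕ) (y : AddMonoidAlgebra k (Fin n → ℤ)) :
    sig k p e y ^ p ^ N = sig k p e (y ^ p ^ N) := by
  rw [pow_char_expand p hp N (sig k p e y), pow_char_expand p hp N y,
    sig_comm_sig p N e y, sig_mapDomain]

set_option maxHeartbeats 2000000 in
set_option synthInstance.maxHeartbeats 800000 in
/-- if `p ^ N₀ • (*pA) ⊆ A`, then the Frobenius test exponent of every
ideal `I ⊆ k[A]` is at most `N₀`: whenever `x ^ (p ^ e) ∈ I^{[p^e]}` for some `e`,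
already `x ^ (p ^ N₀) ∈ I^{[p^{N₀}]}`. -/
theorem stmt17 (n : ℕ) (A : AddSubmonoid (Fin n → ℤ)) (hFG : A.FG)
    (hnonneg : ∀ v ∈ A, ∀ i, 0 ≤ v i)
    (p : ℕ) (hp : p.Prime)
    (k : Type*) [Field k] [CharP k p]
    (N₀ : ℕ) (hN₀ : ∀ v ∈ pWeakNormalization A p, p ^ N₀ • v ∈ A)
    (I : Ideal (monAlg k (A : Set (Fin n → ℤ))))
    (x : monAlg k (A : Set (Fin n → ℤ)))
    (hx : ∃ e : ℕ, x ^ p ^ e ∈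
      Ideal.span ((fun y => y ^ p ^ e) '' (I : Set (monAlg k (A : Set (Fin n → ℤ)))))) :
    x ^ p ^ N₀ ∈
      Ideal.span ((fun y => y ^ p ^ N₀) '' (I : Set (monAlg k (A : Set (Fin n → ℤ))))) := by
  classical
  obtain ⟨e, hxe⟩ := hx
  haveI : ExpChar k p := ExpChar.prime hp
  haveI : CharP (AddMonoidAlgebra k (Fin n → ℤ)) p :=
    charP_of_injective_algebraMap algebraMap_monAlg_injective p
  haveI : ExpChar (AddMonoidAlgebra k (Fin n → ℤ)) p := ExpChar.prime hp
  have hpe : (p : ℕ) ^ e ≠ 0 := pow_ne_zero e hp.ne_zero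
  -- the representation of x ^ p ^ e
  obtain ⟨m, T, g, hsum⟩ := Submodule.mem_span_set'.mp hxe
  choose b hbI hbg using fun i => (g i).2
  have hbg' : ∀ i, b i ^ p ^ e = ↑(g i) := fun i => hbg i
  have hAG : (A : Set (Fin n → ℤ)) ⊆ ↑(AddSubgroup.closure (A : Set (Fin n → ℤ))) :=
    AddSubgroup.subset_closure
  set G := AddSubgroup.closure (A : Set (Fin n → ℤ)) with hG
  have hsupp : ∀ z : monAlg k (A : Set (Fin n → ℤ)),
      ↑(z : AddMonoidAlgebra k (Fin n → ℤ)).coeff.support ⊆ (A : Set (Fin n → ℤ)) :=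
    fun z => support_subset_of_mem_monAlg _ A.zero_mem (fun a ha c hc => A.add_mem ha hc) _ z.2
  -- coerced equation
  have hsumL : (↑x : AddMonoidAlgebra k (Fin n → ℤ)) ^ p ^ e
      = ∑ i, (↑(b i) : AddMonoidAlgebra k (Fin n → ℤ)) ^ p ^ e * ↑(T i) := by
    have h1 : (∑ i, T i * ↑(g i)) = x ^ p ^ e := by
      simpa [smul_eq_mul] using hsum
    have h2 := congrArg (Subalgebra.val (monAlg k (A : Set (Fin n → ℤ)))) h1.symm
    simp only [map_sum, map_mul, map_pow, Subalgebra.coe_val] at h2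
    rw [h2]
    refine Finset.sum_congr rfl (fun i _ => ?_)
    rw [← hbg' i]
    push_cast
    ring
  -- injectivity of multiplication by p ^ e on exponents
  have hqinj : Function.Injective (fun v : Fin n → ℤ => p ^ e • v) := by
    intro v w h
    funext i
    have h1 := congrFun h i
    simp only [Pi.smul_apply, nsmul_eq_mul] at h1
    exact mul_left_cancel₀ (by exact_mod_cast hpe) h1
  -- the projection-division hom
  let Ψ : AddMonoidAlgebra k (Fin n → ℤ) →+ AddMonoidAlgebra k (Fin n → ℤ) :=
    onCoeff ((Finsupp.filterAddHom (fun v => v ∈ G)).comp (Finsupp.comapDomain.addMonoidHom hqinj))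
  have hΨapply : ∀ (y : AddMonoidAlgebra k (Fin n → ℤ)) (v : Fin n → ℤ),
      (Ψ y).coeff v = if v ∈ G then y.coeff (p ^ e • v) else 0 := by
    intro y v
    show (Finsupp.filter _ (Finsupp.comapDomain _ y.coeff _)) v = _
    rw [Finsupp.filter_apply]
    congr 1
  -- single multiplication lemma
  have hone : ∀ (u : Fin n → ℤ) (c : k) (y : AddMonoidAlgebra k (Fin n → ℤ)), u ∈ G →
      Ψ (AddMonoidAlgebra.single (p ^ e • u) c * y) = AddMonoidAlgebra.single u c * Ψ y := by
    intro u c y hu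
    ext v
    rw [hΨapply, AddMonoidAlgebra.coeff_single_mul_apply]
    by_cases hv : v ∈ G
    · rw [if_pos hv, AddMonoidAlgebra.coeff_single_mul_apply, hΨapply,
        if_pos (G.add_mem (G.neg_mem hu) hv)]
      congr 2
      rw [smul_add, smul_neg]
    · rw [if_neg hv, AddMonoidAlgebra.coeff_single_mul_apply, hΨapply, if_neg, mul_zero]
      intro hc
      exact hv (by simpa using G.add_mem hu hc)
  -- assembled multiplication lemma
  have hmulG : ∀ (w z y : AddMonoidAlgebra k (Fin n → ℤ)), ↑z.coeff.support ⊆ (G : Set (Fin n → ℤ)) →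
      w = AddMonoidAlgebra.mapDomain (fun v => p ^ e • v) z →
      Ψ (w * y) = z * Ψ y := by
    intro w z y hz hw
    have hz' : z = ∑ u ∈ z.coeff.support, AddMonoidAlgebra.single u (z.coeff u) := by
      conv_lhs => rw [← AddMonoidAlgebra.sum_coeff_single z]
      rfl
    have expand : AddMonoidAlgebra.mapDomain (fun v => p ^ e • v) z
        = ∑ u ∈ z.coeff.support, AddMonoidAlgebra.single (p ^ e • u) (z.coeff u) := by
      conv_lhs => rw [hz']
      rw [← AddMonoidHom.mk'_apply (AddMonoidAlgebra.mapDomain (fun v : Fin n → ℤ => p ^ e • v))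
        (AddMonoidAlgebra.mapDomain_add _), map_sum]
      refine Finset.sum_congr rfl (fun u hu => ?_)
      rw [AddMonoidHom.mk'_apply, AddMonoidAlgebra.mapDomain_single]
    rw [hw, expand, Finset.sum_mul, map_sum]
    conv_rhs => rw [hz', Finset.sum_mul]
    refine Finset.sum_congr rfl (fun u hu => ?_)
    exact hone u (z.coeff u) y (hz hu)
  -- Ψ on Frobenius powers
  have hΨpow : ∀ (z y : AddMonoidAlgebra k (Fin n → ℤ)), ↑z.coeff.support ⊆ (G : Set (Fin n → ℤ)) →
      Ψ (z ^ p ^ e * y) = sig k p e z * Ψ y := by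
    intro z y hz
    rw [pow_char_expand p hp e z]
    exact hmulG _ (sig k p e z) y (fun v hv => hz (sig_support p e z hv)) rfl
  have hΨone : Ψ 1 = 1 := by
    ext v
    rw [hΨapply]
    show _ = (Finsupp.single 0 1 : (Fin n → ℤ) →₀ k) v
    by_cases hv : v ∈ G
    · rw [if_pos hv]
      show (Finsupp.single (0 : Fin n → ℤ) (1 : k)) (p ^ e • v) = _
      rw [Finsupp.single_apply, Finsupp.single_apply]
      by_cases h0 : v = 0
      · subst h0; simp
      · rw [if_neg, if_neg (fun hc => h0 hc.symm)]
        intro hc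
        exact h0 (hqinj (a₁ := v) (a₂ := 0) (by simpa using hc.symm))
    · rw [if_neg hv, Finsupp.single_apply, if_neg]
      intro hc
      exact hv (hc ▸ G.zero_mem)
  have hΨX : ∀ z : AddMonoidAlgebra k (Fin n → ℤ), ↑z.coeff.support ⊆ (G : Set (Fin n → ℤ)) →
      Ψ (z ^ p ^ e) = sig k p e z := by
    intro z hz
    have h1 := hΨpow z 1 hz
    rwa [mul_one, hΨone, mul_one] at h1
  -- apply Ψ to the equation
  have hEq1 : sig k p e (↑x) = ∑ i, sig k p e (↑(b i)) * Ψ (↑(T i)) := by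
    have h1 := congrArg Ψ hsumL
    rw [hΨX _ (Set.Subset.trans (hsupp x) hAG), map_sum] at h1
    rw [h1]
    refine Finset.sum_congr rfl (fun i _ => ?_)
    exact hΨpow _ _ (Set.Subset.trans (hsupp (b i)) hAG)
  -- supports of the coefficients
  have hSsupp : ∀ i, ∀ v ∈ (Ψ (↑(T i) : AddMonoidAlgebra k (Fin n → ℤ))).coeff.support,
      p ^ N₀ • v ∈ A := by
    intro i v hv
    have h1 : (Ψ (↑(T i))).coeff v ≠ 0 := Finsupp.mem_support_iff.mp hv
    rw [hΨapply] at h1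
    by_cases hvG : v ∈ G
    · rw [if_pos hvG] at h1
      have h2 : p ^ e • v ∈ A := hsupp (T i) (Finsupp.mem_support_iff.mpr h1)
      exact hN₀ v ⟨⟨hvG, p ^ e, pow_pos hp.pos e, h2⟩, e, h2⟩
    · rw [if_neg hvG] at h1; exact absurd rfl h1
  -- raise to the p ^ N₀ power
  have hEq2 : sig k p e (↑x) ^ p ^ N₀
      = ∑ i, sig k p e (↑(b i)) ^ p ^ N₀ * Ψ (↑(T i)) ^ p ^ N₀ := by
    rw [hEq1, sum_pow_char_pow]
    exact Finset.sum_congr rfl (fun i _ => mul_pow _ _ _)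
  -- untwisting map
  obtain ⟨θ, hθ1, hθadd, hθmul⟩ := exists_theta k p hp e
  have hθ0 : θ 0 = 0 := by
    have h1 := hθmul 0 0
    simpa [zero_pow hpe] using h1
  let Pj : AddMonoidAlgebra k (Fin n → ℤ) →+ AddMonoidAlgebra k (Fin n → ℤ) :=
    onCoeff (Finsupp.mapRange.addMonoidHom (AddMonoidHom.mk' θ hθadd))
  have hPjapply : ∀ (y : AddMonoidAlgebra k (Fin n → ℤ)) (v : Fin n → ℤ),
      (Pj y).coeff v = θ (y.coeff v) :=
    fun y v => rfl
  have hθpow : ∀ a : k, θ (a ^ p ^ e) = a := by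
    intro a
    have h1 := hθmul a 1
    rwa [mul_one, hθ1, mul_one] at h1
  have hPjσ : ∀ z : AddMonoidAlgebra k (Fin n → ℤ), Pj (sig k p e z) = z := by
    intro z; ext v
    rw [hPjapply, sig_apply]
    exact hθpow _
  have hPjone : ∀ (u : Fin n → ℤ) (c : k) (y : AddMonoidAlgebra k (Fin n → ℤ)),
      Pj (AddMonoidAlgebra.single u (c ^ p ^ e) * y) = AddMonoidAlgebra.single u c * Pj y := by
    intro u c y
    ext v
    rw [hPjapply, AddMonoidAlgebra.coeff_single_mul_apply, AddMonoidAlgebra.coeff_single_mul_apply,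
      hθmul, hPjapply]
  have hPjmul : ∀ (z y : AddMonoidAlgebra k (Fin n → ℤ)),
      Pj (sig k p e z * y) = z * Pj y := by
    intro z y
    have hz' : sig k p e z = ∑ u ∈ z.coeff.support, AddMonoidAlgebra.single u ((z.coeff u) ^ p ^ e) := by
      ext v
      rw [sig_apply, AddMonoidAlgebra.coeff_sum, Finset.sum_apply']
      by_cases hv : v ∈ z.coeff.support
      · rw [Finset.sum_eq_single v]
        · rw [AddMonoidAlgebra.coeff_single, Finsupp.single_apply, if_pos rfl]
        · intro u hu huv
          rw [AddMonoidAlgebra.coeff_single, Finsupp.single_apply, if_neg huv]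
        · intro hc; exact absurd hv hc
      · rw [Finset.sum_eq_zero]
        · rw [Finsupp.notMem_support_iff.mp hv, zero_pow hpe]
        · intro u hu
          rw [AddMonoidAlgebra.coeff_single, Finsupp.single_apply,
            if_neg (fun hc => (hc ▸ hv) hu)]
    have hz2 : z = ∑ u ∈ z.coeff.support, AddMonoidAlgebra.single u (z.coeff u) := by
      conv_lhs => rw [← AddMonoidAlgebra.sum_coeff_single z]
      rfl
    rw [hz', Finset.sum_mul, map_sum]
    conv_rhs => rw [hz2, Finset.sum_mul]
    exact Finset.sum_congr rfl (fun u _ => hPjone u (z.coeff u) y)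
  -- final equation
  have hEq3 : (↑x : AddMonoidAlgebra k (Fin n → ℤ)) ^ p ^ N₀
      = ∑ i, (↑(b i) : AddMonoidAlgebra k (Fin n → ℤ)) ^ p ^ N₀ * Pj (Ψ (↑(T i)) ^ p ^ N₀) := by
    have h1 := congrArg Pj hEq2
    rw [map_sum] at h1
    rw [sig_pow p hp e N₀, hPjσ] at h1
    rw [h1]
    refine Finset.sum_congr rfl (fun i _ => ?_)
    rw [sig_pow p hp e N₀, hPjmul]
  -- the coefficients lie in the semigroup algebra
  have hCmem : ∀ i, Pj (Ψ (↑(T i) : AddMonoidAlgebra k (Fin n → ℤ)) ^ p ^ N₀)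
      ∈ monAlg k (A : Set (Fin n → ℤ)) := by
    intro i
    refine mem_monAlg_of_support _ _ ?_
    intro v hv
    have h1 : v ∈ (Ψ (↑(T i) : AddMonoidAlgebra k (Fin n → ℤ)) ^ p ^ N₀).coeff.support := by
      have hv2 : (Pj (Ψ (↑(T i) : AddMonoidAlgebra k (Fin n → ℤ)) ^ p ^ N₀)).coeff v ≠ 0 := Finsupp.mem_support_iff.mp (Finset.mem_coe.mp hv)
      rw [Finsupp.mem_support_iff]
      intro h
      exact hv2 (by rw [hPjapply, h, hθ0])
    rw [pow_char_expand p hp N₀] at h1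
    have h2 := Finsupp.mapDomain_support (f := fun v : Fin n → ℤ => p ^ N₀ • v)
      (s := (sig k p N₀ (Ψ (↑(T i) : AddMonoidAlgebra k (Fin n → ℤ)))).coeff) h1
    rw [Finset.mem_image] at h2
    obtain ⟨u, hu, rfl⟩ := h2
    exact hSsupp i u (sig_support p N₀ _ hu)
  -- back in the subalgebra
  let C : Fin m → monAlg k (A : Set (Fin n → ℤ)) := fun i => ⟨Pj (Ψ (↑(T i)) ^ p ^ N₀), hCmem i⟩
  have hfinal : x ^ p ^ N₀ = ∑ i, b i ^ p ^ N₀ * C i := by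
    apply Subtype.val_injective
    show (Subalgebra.val _) (x ^ p ^ N₀) = (Subalgebra.val _) (∑ i, b i ^ p ^ N₀ * C i)
    simp only [map_sum, map_mul, map_pow, Subalgebra.coe_val]
    exact hEq3
  rw [hfinal]
  refine Ideal.sum_mem _ (fun i _ => ?_)
  exact Ideal.mul_mem_right _ _ (Ideal.subset_span ⟨b i, hbI i, rfl⟩)
end
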